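/- arXiv:2510.27279 — 3 statements merged into one kernel-verified Lean document; each statement's English description precedes it below -/
import Mathlib

section
/- Let G be a finite simple graph. Then φ(G) = ψ(G), where φ(G) = 2^{-3|V(G)|} · Σ_{E' ⊆ E(G)} (-2)^{|E'|} · χ₃(G|_{E'}) (the sum over all subsets E' of the edge set, G|_{E'} the spanning subgraph of G with edge set E', and χ₃ the number of proper 3-colorings), and ψ(G) = 2^{-2|V(G)|} · Σ_{U ⊆ V(G)} (-1/2)^{|V(G)|-|U|} · 2^{corank(A(G|_U))} (the sum over all subsets U of the vertex set, G|_U the induced subgraph on U, A(·) the adjacency matrix with entries in the field 𝔽₂ with two elements, and corank the corank of the matrix over 𝔽₂). -/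
open Finset

/-- The number of proper 3-colorings of the spanning subgraph of `G`
with edge set `E'` (a subset of the edge set of a simple graph on `V`). -/
def chi3 {V : Type*} [Fintype V] [DecidableEq V] (E' : Finset (Sym2 V)) : ℕ :=
  (Finset.univ.filter (fun f : V → Fin 3 => ∀ a b : V, s(a, b) ∈ E' → f a ≠ f b)).card

/-- The adjacency matrix over `𝔽₂` of the subgraph of `G` induced by the
vertex subset `U` (equivalently, the submatrix of the adjacency matrix of `G`
with rows and columns indexed by `U`). -/
def adjMatrixOn {V : Type*} [Fintype V] [DecidableEq V] (G : SimpleGraph V)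
    [DecidableRel G.Adj] (U : Finset V) : Matrix U U (ZMod 2) :=
  Matrix.of fun i j => if G.Adj (i : V) (j : V) then 1 else 0

/-- The corank over `𝔽₂` of a square matrix over `𝔽₂`, i.e. the dimension
of its kernel. -/
noncomputable def corank {m : Type*} [Fintype m] [DecidableEq m]
    (M : Matrix m m (ZMod 2)) : ℕ :=
  Module.finrank (ZMod 2) (LinearMap.ker M.mulVecLin)

set_option linter.unusedSectionVars false
set_option linter.unreachableTactic false
set_option linter.unusedTactic false
set_option linter.unnecessarySeqFocus false
set_option maxHeartbeats 1000000


section Helpers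
variable {ι : Type*}
def zchi (z : ZMod 2) : ℚ := if z = 0 then 1 else -1
lemma zmod2_cases : ∀ z : ZMod 2, z = 0 ∨ z = 1 := by decide
lemma zchi_zero : zchi 0 = 1 := by simp [zchi]
lemma zchi_one : zchi 1 = -1 := by
  have h : (1 : ZMod 2) ≠ 0 := by decide
  simp [zchi, h]
lemma zchi_add (a b : ZMod 2) : zchi (a + b) = zchi a * zchi b := by
  rcases zmod2_cases a with ha | ha <;> rcases zmod2_cases b with hb | hb <;>
    subst ha <;> subst hb <;>
    simp [zchi_zero, zchi_one, show (1 : ZMod 2) + 1 = 0 from by decide]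
lemma zchi_sum (s : Finset ι) (f : ι → ZMod 2) :
    zchi (∑ i ∈ s, f i) = ∏ i ∈ s, zchi (f i) := by
  classical
  induction s using Finset.cons_induction with
  | empty => simp [zchi]
  | cons a s ha ih => rw [Finset.sum_cons, Finset.prod_cons, zchi_add, ih]
lemma zchi_natCast (k : ℕ) : zchi (k : ZMod 2) = (-1 : ℚ) ^ k := by
  induction k with
  | zero => simp [zchi]
  | succ n ih =>
      push_cast
      rw [zchi_add, ih, pow_succ, zchi_one]
lemma natCast_zmod2 (k : ℕ) : (k : ZMod 2) = if Even k then 0 else 1 := by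
  split_ifs with h
  · obtain ⟨m, rfl⟩ := h
    push_cast
    rw [← two_mul]
    have h2 : (2 : ZMod 2) = 0 := by decide
    rw [h2, zero_mul]
  · obtain ⟨m, rfl⟩ := Nat.not_even_iff_odd.mp h
    push_cast
    have h2 : (2 : ZMod 2) = 0 := by decide
    rw [h2, zero_mul, zero_add]
lemma sum_powerset_pow (t : Finset ι) (a : ℚ) :
    ∑ W ∈ t.powerset, a ^ W.card = (a + 1) ^ t.card := by
  classical
  have h := Finset.prod_add (fun _ : ι => a) (fun _ => (1 : ℚ)) t
  simpa [Finset.prod_const] using h.symm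
lemma sum_powerset_pow_sub (t : Finset ι) (a : ℚ) :
    ∑ W ∈ t.powerset, a ^ (t.card - W.card) = (a + 1) ^ t.card := by
  classical
  rw [← sum_powerset_pow]
  refine Finset.sum_nbij' (fun W => t \ W) (fun W => t \ W) ?_ ?_ ?_ ?_ ?_
  · intro W hW; exact Finset.mem_powerset.mpr (Finset.sdiff_subset)
  · intro W hW; exact Finset.mem_powerset.mpr (Finset.sdiff_subset)
  · intro W hW; exact Finset.sdiff_sdiff_eq_self (Finset.mem_powerset.mp hW)
  · intro W hW; exact Finset.sdiff_sdiff_eq_self (Finset.mem_powerset.mp hW)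
  · intro W hW
    rw [Finset.card_sdiff_of_subset (Finset.mem_powerset.mp hW)]
end Helpers

section GraphHelpers
variable {V : Type*} [Fintype V] [DecidableEq V] (G : SimpleGraph V) [DecidableRel G.Adj]

lemma dart_sum (q : V → V → ZMod 2) :
    ∑ d : G.Dart, q d.fst d.snd = ∑ v : V, ∑ u ∈ G.neighborFinset v, q v u := by
  rw [← Finset.sum_fiberwise (Finset.univ : Finset G.Dart) (fun d => d.fst)
        (fun d => q d.fst d.snd)]
  refine Finset.sum_congr rfl fun v _ => ?_
  refine Finset.sum_bij' (i := fun d _ => d.snd)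
    (j := fun u hu => G.dartOfNeighborSet v ⟨u, by simpa using hu⟩) ?_ ?_ ?_ ?_ ?_
  · intro d hd
    have h1 : d.fst = v := (Finset.mem_filter.mp hd).2
    have := d.adj
    rw [h1] at this
    simpa using this
  · intro u hu
    simp [SimpleGraph.dartOfNeighborSet]
  · intro d hd
    have h1 : d.fst = v := (Finset.mem_filter.mp hd).2
    apply SimpleGraph.Dart.ext
    simp [SimpleGraph.dartOfNeighborSet, h1.symm]
  · intro u hu
    rfl
  · intro d hd
    have h1 : d.fst = v := (Finset.mem_filter.mp hd).2
    rw [h1]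

lemma edge_sum (q : V → V → ZMod 2) :
    ∑ e ∈ G.edgeFinset,
        Sym2.lift ⟨fun a b => q a b + q b a, fun a b => by ring⟩ e
      = ∑ d : G.Dart, q d.fst d.snd := by
  rw [← Finset.sum_fiberwise_of_maps_to
        (g := fun d : G.Dart => d.edge) (t := G.edgeFinset)
        (fun d _ => by simp [SimpleGraph.Dart.edge_mem]) (fun d => q d.fst d.snd)]
  refine Finset.sum_congr rfl fun e he => ?_
  rw [SimpleGraph.mem_edgeFinset] at he
  revert he
  induction e with
  | _ a b =>
    intro he
    rw [SimpleGraph.mem_edgeSet] at he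
    let d : G.Dart := ⟨(a, b), he⟩
    have hfib : (Finset.univ.filter fun d' : G.Dart => d'.edge = s(a, b)) = {d, d.symm} := by
      have := d.edge_fiber
      exact this
    rw [hfib, Finset.sum_pair d.symm_ne.symm]
    simp [Sym2.lift_mk]
    rfl

def nbS (S : Finset V) (v : V) : ℕ := (G.neighborFinset v ∩ S).card

def badS (S : Finset V) : Finset V := univ.filter fun v => ¬ Even (nbS G S v)

def Cterm (S : Finset V) : ℚ :=
  if ∀ v ∈ S, Even (nbS G S v) then (-1 : ℚ) ^ (badS G S).card * 2 ^ S.card else 0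

lemma indicator_sum_nbS (S : Finset V) (v : V) :
    (∑ u ∈ G.neighborFinset v, if u ∈ S then (1 : ZMod 2) else 0) = (nbS G S v : ZMod 2) := by
  rw [Finset.sum_boole]
  congr 1

lemma deg_sum_eq (S : Finset V) :
    (∑ v ∈ S, (G.degree v : ZMod 2)) = ∑ v : V, (nbS G S v : ZMod 2) := by
  have h1 : ∀ v, (nbS G S v : ZMod 2)
      = ∑ u : V, (if G.Adj v u then (if u ∈ S then (1 : ZMod 2) else 0) else 0) := by
    intro v
    rw [← indicator_sum_nbS, SimpleGraph.neighborFinset_eq_filter, Finset.sum_filter]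
  rw [Finset.sum_congr rfl fun v _ => h1 v, Finset.sum_comm]
  have h2 : ∀ u : V, (∑ v : V, if G.Adj v u then (if u ∈ S then (1 : ZMod 2) else 0) else 0)
      = if u ∈ S then (G.degree u : ZMod 2) else 0 := by
    intro u
    by_cases hu : u ∈ S
    · simp only [hu, if_true]
      rw [Finset.sum_boole]
      congr 1
      rw [SimpleGraph.degree]
      congr 1
      rw [SimpleGraph.neighborFinset_eq_filter]
      exact Finset.filter_congr fun v _ => by rw [G.adj_comm]
    · simp [hu]
  rw [Finset.sum_congr rfl fun u _ => h2 u, Finset.sum_ite_mem, Finset.univ_inter]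

lemma zchi_bad (S : Finset V) :
    zchi (∑ v ∈ S, (G.degree v : ZMod 2)) = (-1 : ℚ) ^ (badS G S).card := by
  rw [deg_sum_eq, Finset.sum_congr rfl fun v _ => natCast_zmod2 (nbS G S v)]
  have : (∑ v : V, if Even (nbS G S v) then (0 : ZMod 2) else 1)
      = ∑ v : V, (if ¬ Even (nbS G S v) then (1 : ZMod 2) else 0) := by
    refine Finset.sum_congr rfl fun v _ => ?_
    by_cases h : Even (nbS G S v) <;> simp [h]
  rw [this, Finset.sum_boole, zchi_natCast]
  rfl
end GraphHelpers

section LHS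
variable {V : Type*} [Fintype V] [DecidableEq V] (G : SimpleGraph V) [DecidableRel G.Adj]

def sInd (S : Finset V) (v : V) : ZMod 2 := if v ∈ S then 1 else 0

def qST (S T : Finset V) (a b : V) : ZMod 2 := sInd S a + sInd T a * sInd S b

def fST (S T : Finset V) (v : V) : Fin 3 := if v ∈ T then 2 else if v ∈ S then 1 else 0

def wq (f : V → Fin 3) : Sym2 V → ℚ :=
  Sym2.lift ⟨fun a b => if f a = f b then 1 else -1, fun a b => by simp [eq_comm]⟩

lemma wq_eq_zchi (S T : Finset V) (hTS : T ⊆ S) (a b : V) :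
    (if fST S T a = fST S T b then (1 : ℚ) else -1)
      = zchi (qST S T a b + qST S T b a) := by
  have h11 : (1 : ZMod 2) + 1 = 0 := by decide
  by_cases haT : a ∈ T <;> by_cases haS : a ∈ S <;>
    by_cases hbT : b ∈ T <;> by_cases hbS : b ∈ S <;>
    first
      | exact absurd (hTS haT) haS
      | exact absurd (hTS hbT) hbS
      | simp [fST, qST, sInd, haT, haS, hbT, hbS, h11, zchi_zero, zchi_one]

lemma prod_wq (S T : Finset V) (hTS : T ⊆ S) :
    ∏ e ∈ G.edgeFinset, wq (fST S T) e
      = zchi (∑ v ∈ S, (G.degree v : ZMod 2)) * ∏ v ∈ T, zchi ((nbS G S v : ZMod 2)) := by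
  have step1 : ∏ e ∈ G.edgeFinset, wq (fST S T) e
      = ∏ e ∈ G.edgeFinset,
          zchi (Sym2.lift ⟨fun a b => qST S T a b + qST S T b a, fun a b => by ring⟩ e) := by
    refine Finset.prod_congr rfl fun e he => ?_
    induction e with
    | _ a b => exact wq_eq_zchi S T hTS a b
  rw [step1, ← zchi_sum, edge_sum, dart_sum]
  have step4 : ∀ v : V, (∑ u ∈ G.neighborFinset v, qST S T v u)
      = (G.degree v : ZMod 2) * sInd S v + sInd T v * (nbS G S v : ZMod 2) := by
    intro v
    unfold qST
    rw [Finset.sum_add_distrib, Finset.sum_const, ← Finset.mul_sum]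
    congr 1
    · rw [nsmul_eq_mul]
      rfl
    · congr 1
      exact indicator_sum_nbS G S v
  rw [Finset.sum_congr rfl fun v _ => step4 v, Finset.sum_add_distrib]
  have h5 : (∑ v : V, (G.degree v : ZMod 2) * sInd S v) = ∑ v ∈ S, (G.degree v : ZMod 2) := by
    simp only [sInd, mul_ite, mul_one, mul_zero]
    rw [Finset.sum_ite_mem, Finset.univ_inter]
  have h6 : (∑ v : V, sInd T v * (nbS G S v : ZMod 2)) = ∑ v ∈ T, (nbS G S v : ZMod 2) := by
    simp only [sInd, ite_mul, one_mul, zero_mul]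
    rw [Finset.sum_ite_mem, Finset.univ_inter]
  rw [h5, h6, zchi_add, zchi_sum T]

lemma sum_T (S : Finset V) :
    ∑ T ∈ S.powerset, ∏ e ∈ G.edgeFinset, wq (fST S T) e = Cterm G S := by
  have h1 : ∀ T ∈ S.powerset, ∏ e ∈ G.edgeFinset, wq (fST S T) e
      = zchi (∑ v ∈ S, (G.degree v : ZMod 2)) * ∏ v ∈ T, zchi ((nbS G S v : ZMod 2)) :=
    fun T hT => prod_wq G S T (Finset.mem_powerset.mp hT)
  rw [Finset.sum_congr rfl h1, ← Finset.mul_sum]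
  have h2 := Finset.prod_add (fun v => zchi ((nbS G S v : ZMod 2))) (fun _ => (1 : ℚ)) S
  simp only [Finset.prod_const_one, mul_one] at h2
  rw [← h2]
  unfold Cterm
  split_ifs with hgood
  · rw [zchi_bad]
    congr 1
    have : ∀ v ∈ S, zchi ((nbS G S v : ZMod 2)) + 1 = 2 := by
      intro v hv
      rw [natCast_zmod2, if_pos (hgood v hv), zchi_zero]
      norm_num
    rw [Finset.prod_congr rfl this, Finset.prod_const]
  · push_neg at hgood
    obtain ⟨v, hvS, hodd⟩ := hgood
    have hzero : zchi ((nbS G S v : ZMod 2)) + 1 = 0 := by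
      rw [natCast_zmod2, if_neg hodd, zchi_one]
      norm_num
    rw [Finset.prod_eq_zero hvS hzero, mul_zero]

lemma fST_of_fiber (S : Finset V) (f : V → Fin 3)
    (hf : Finset.univ.filter (fun v => f v ≠ 0) = S) :
    fST S (Finset.univ.filter fun v => f v = 2) = f := by
  have h3 : ∀ z : Fin 3, z ≠ 0 → z ≠ 2 → z = 1 := by decide
  funext v
  unfold fST
  by_cases h2 : f v = 2
  · simp [h2]
  · by_cases h0 : f v = 0
    · have hvS : v ∉ S := by
        rw [← hf]
        simp [h0]
      simp [hvS, h2, h0, Finset.mem_filter]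
    · have hvS : v ∈ S := by
        rw [← hf]
        simp [h0]
      simp [hvS, h2, Finset.mem_filter, h3 (f v) h0 h2]

lemma colorings_sum :
    ∑ f : V → Fin 3, ∏ e ∈ G.edgeFinset, wq f e
      = ∑ S ∈ (Finset.univ : Finset V).powerset, Cterm G S := by
  rw [← Finset.sum_fiberwise_of_maps_to
        (g := fun f : V → Fin 3 => Finset.univ.filter fun v => f v ≠ 0)
        (t := (Finset.univ : Finset V).powerset)
        (fun f _ => Finset.mem_powerset.mpr (Finset.filter_subset _ _))
        (fun f => ∏ e ∈ G.edgeFinset, wq f e)]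
  refine Finset.sum_congr rfl fun S hS => ?_
  rw [← sum_T G S]
  refine Finset.sum_bij' (i := fun f _ => Finset.univ.filter fun v => f v = 2)
    (j := fun T _ => fST S T) ?_ ?_ ?_ ?_ ?_
  · intro f hf
    rw [Finset.mem_filter] at hf
    refine Finset.mem_powerset.mpr fun v hv => ?_
    rw [← hf.2]
    rw [Finset.mem_filter] at hv ⊢
    refine ⟨hv.1, ?_⟩
    rw [hv.2]
    decide
  · intro T hT
    have hTS := Finset.mem_powerset.mp hT
    rw [Finset.mem_filter]
    refine ⟨Finset.mem_univ _, ?_⟩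
    ext v
    rw [Finset.mem_filter]
    unfold fST
    by_cases hvT : v ∈ T
    · simp [hvT, hTS hvT]
    · by_cases hvS : v ∈ S <;> simp [hvT, hvS]
  · intro f hf
    exact fST_of_fiber S f (Finset.mem_filter.mp hf).2
  · intro T hT
    have hTS := Finset.mem_powerset.mp hT
    ext v
    rw [Finset.mem_filter]
    unfold fST
    by_cases hvT : v ∈ T
    · simp [hvT]
    · by_cases hvS : v ∈ S <;> simp [hvT, hvS] <;> decide
  · intro f hf
    rw [fST_of_fiber S f (Finset.mem_filter.mp hf).2]
end LHS

section LHS2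
variable {V : Type*} [Fintype V] [DecidableEq V] (G : SimpleGraph V) [DecidableRel G.Adj]

def predf (f : V → Fin 3) : Sym2 V → Bool :=
  Sym2.lift ⟨fun a b => decide (f a ≠ f b), fun a b => by
    simp [decide_eq_decide, ne_comm]⟩

lemma per_f (f : V → Fin 3) :
    ∑ E' ∈ G.edgeFinset.powerset,
        (-2 : ℚ) ^ E'.card * (if ∀ a b : V, s(a, b) ∈ E' → f a ≠ f b then (1 : ℚ) else 0)
      = ∏ e ∈ G.edgeFinset, wq f e := by
  have hprod : ∏ e ∈ G.edgeFinset, wq f e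
      = ∏ e ∈ G.edgeFinset, ((-2 : ℚ) * (if predf f e = true then 1 else 0) + 1) := by
    refine Finset.prod_congr rfl fun e _ => ?_
    induction e with
    | _ a b =>
      show (if f a = f b then (1 : ℚ) else -1) = _
      by_cases h : f a = f b <;> simp [predf, h] <;> norm_num
  rw [hprod, Finset.prod_add]
  refine Finset.sum_congr rfl fun E' hE' => ?_
  rw [Finset.prod_const_one, mul_one, Finset.prod_mul_distrib, Finset.prod_const,
    Finset.prod_boole]
  congr 2
  apply propext
  constructor
  · intro H e he
    revert he
    induction e with
    | _ a b =>
      intro he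
      simpa [predf] using H a b he
  · intro H a b hab
    have := H _ hab
    simpa [predf] using this

lemma lhs_eq :
    ∑ E' ∈ G.edgeFinset.powerset, (-2 : ℚ) ^ E'.card * (chi3 E' : ℚ)
      = ∑ S ∈ (Finset.univ : Finset V).powerset, Cterm G S := by
  have hcast : ∀ E' : Finset (Sym2 V), (chi3 E' : ℚ)
      = ∑ f : V → Fin 3, (if ∀ a b : V, s(a, b) ∈ E' → f a ≠ f b then (1 : ℚ) else 0) := by
    intro E'
    rw [Finset.sum_boole]
    rfl
  calc ∑ E' ∈ G.edgeFinset.powerset, (-2 : ℚ) ^ E'.card * (chi3 E' : ℚ)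
      = ∑ E' ∈ G.edgeFinset.powerset, ∑ f : V → Fin 3,
          (-2 : ℚ) ^ E'.card * (if ∀ a b : V, s(a, b) ∈ E' → f a ≠ f b then (1 : ℚ) else 0) := by
        refine Finset.sum_congr rfl fun E' _ => ?_
        rw [hcast, Finset.mul_sum]
    _ = ∑ f : V → Fin 3, ∑ E' ∈ G.edgeFinset.powerset,
          (-2 : ℚ) ^ E'.card * (if ∀ a b : V, s(a, b) ∈ E' → f a ≠ f b then (1 : ℚ) else 0) :=
        Finset.sum_comm
    _ = ∑ f : V → Fin 3, ∏ e ∈ G.edgeFinset, wq f e :=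
        Finset.sum_congr rfl fun f _ => per_f G f
    _ = ∑ S ∈ (Finset.univ : Finset V).powerset, Cterm G S := colorings_sum G
end LHS2

section RHS
variable {V : Type*} [Fintype V] [DecidableEq V] (G : SimpleGraph V) [DecidableRel G.Adj]

def PU (U : Finset V) (x : V → ZMod 2) : Prop :=
  (∀ v, v ∉ U → x v = 0) ∧ ∀ v ∈ U, (∑ u ∈ G.neighborFinset v, x u) = 0

instance (U : Finset V) : DecidablePred (PU G U) := fun x => by
  unfold PU; infer_instance

lemma ext_sum (U : Finset V) (y : ↥U → ZMod 2) (v : V) (hv : v ∈ U) :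
    (∑ u ∈ G.neighborFinset v, if h : u ∈ U then y ⟨u, h⟩ else 0)
      = (adjMatrixOn G U).mulVec y ⟨v, hv⟩ := by
  have hrhs : (adjMatrixOn G U).mulVec y ⟨v, hv⟩
      = ∑ j : ↥U, (if G.Adj v (j : V) then 1 else 0) * y j := by
    simp [Matrix.mulVec, dotProduct, adjMatrixOn]
  rw [hrhs]
  have h1 : ∀ j : ↥U,
      (if G.Adj v (j : V) then 1 else 0) * y j
        = (fun u => (if G.Adj v u then 1 else 0) *
            (if h : u ∈ U then y ⟨u, h⟩ else 0)) (j : V) := by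
    intro j
    simp only
    rw [dif_pos j.2]
  rw [Finset.sum_congr rfl fun j _ => h1 j, Finset.sum_coe_sort U
    (fun u => (if G.Adj v u then 1 else 0) * (if h : u ∈ U then y ⟨u, h⟩ else 0))]
  rw [Finset.sum_subset (Finset.subset_univ U)
    (fun u _ hu => by rw [dif_neg hu, mul_zero])]
  rw [SimpleGraph.neighborFinset_eq_filter, Finset.sum_filter]
  refine Finset.sum_congr rfl fun u _ => ?_
  by_cases h : G.Adj v u <;> simp [h]

noncomputable def kerEquiv (U : Finset V) :
    (LinearMap.ker (adjMatrixOn G U).mulVecLin) ≃ {x : V → ZMod 2 // PU G U x} where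
  toFun y := ⟨fun v => if h : v ∈ U then (y : ↥U → ZMod 2) ⟨v, h⟩ else 0, by
    constructor
    · intro v hv
      simp only [dif_neg hv]
    · intro v hv
      rw [show (∑ u ∈ G.neighborFinset v,
          (fun w => if h : w ∈ U then (y : ↥U → ZMod 2) ⟨w, h⟩ else 0) u)
        = ∑ u ∈ G.neighborFinset v, if h : u ∈ U then (y : ↥U → ZMod 2) ⟨u, h⟩ else 0
        from rfl]
      rw [ext_sum G U _ v hv]
      have hy := y.2
      rw [LinearMap.mem_ker, Matrix.mulVecLin_apply] at hy
      rw [hy]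
      rfl⟩
  invFun x := ⟨fun u => x.1 u.1, by
    rw [LinearMap.mem_ker, Matrix.mulVecLin_apply]
    funext i
    rw [← ext_sum G U _ i.1 i.2]
    have hx : ∀ u, (if h : u ∈ U then x.1 u else 0) = x.1 u := by
      intro u
      by_cases h : u ∈ U
      · rw [dif_pos h]
      · rw [dif_neg h, (x.2.1 u h)]
    rw [Finset.sum_congr rfl fun u _ => hx u]
    exact x.2.2 i.1 i.2⟩
  left_inv y := by
    ext u
    simp [dif_pos u.2]
  right_inv x := by
    ext v
    by_cases h : v ∈ U
    · simp [dif_pos h]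
    · simp [dif_neg h, (x.2.1 v h).symm]

lemma corank_card (U : Finset V) :
    (2 : ℚ) ^ (corank (adjMatrixOn G U))
      = ((Finset.univ.filter (fun x : V → ZMod 2 => PU G U x)).card : ℚ) := by
  have hfin : Fintype (LinearMap.ker (adjMatrixOn G U).mulVecLin) := Fintype.ofFinite _
  have h1 : Fintype.card (LinearMap.ker (adjMatrixOn G U).mulVecLin)
      = 2 ^ (corank (adjMatrixOn G U)) := by
    have := Module.card_eq_pow_finrank (K := ZMod 2)
      (V := LinearMap.ker (adjMatrixOn G U).mulVecLin)
    rwa [ZMod.card] at this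
  have h2 : Fintype.card (LinearMap.ker (adjMatrixOn G U).mulVecLin)
      = Fintype.card {x : V → ZMod 2 // PU G U x} := Fintype.card_congr (kerEquiv G U)
  rw [← Nat.cast_ofNat, ← Nat.cast_pow, ← h1, h2, Fintype.card_subtype]

end RHS

section RHS2
variable {V : Type*} [Fintype V] [DecidableEq V] (G : SimpleGraph V) [DecidableRel G.Adj]

lemma per_x (x : V → ZMod 2) :
    ∑ U ∈ (Finset.univ : Finset V).powerset,
        (-(1 : ℚ) / 2) ^ (Fintype.card V - U.card) * (if PU G U x then 1 else 0)
      = (if ∀ v ∈ (Finset.univ.filter fun v => x v ≠ 0),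
            v ∉ (Finset.univ.filter fun v => (∑ u ∈ G.neighborFinset v, x u) ≠ 0) then
          (-1 : ℚ) ^ (Finset.univ.filter fun v => (∑ u ∈ G.neighborFinset v, x u) ≠ 0).card
            * 2 ^ (Finset.univ.filter fun v => x v ≠ 0).card
        else 0) / 2 ^ (Fintype.card V) := by
  set n := Fintype.card V
  set Sx := (Finset.univ.filter fun v => x v ≠ 0) with hSx
  set Bx := (Finset.univ.filter fun v => (∑ u ∈ G.neighborFinset v, x u) ≠ 0) with hBx
  have hiff : ∀ U : Finset V, PU G U x ↔ (Sx ⊆ U ∧ ∀ v ∈ U, v ∉ Bx) := by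
    intro U
    constructor
    · rintro ⟨h1, h2⟩
      refine ⟨fun v hv => ?_, fun v hv => ?_⟩
      · by_contra hvU
        exact (Finset.mem_filter.mp hv).2 (h1 v hvU)
      · rw [hBx, Finset.mem_filter]
        push_neg
        intro _
        exact h2 v hv
    · rintro ⟨h1, h2⟩
      constructor
      · intro v hv
        by_contra hx0
        exact hv (h1 (Finset.mem_filter.mpr ⟨Finset.mem_univ _, hx0⟩))
      · intro v hv
        have h3 := h2 v hv
        rw [hBx, Finset.mem_filter] at h3
        push_neg at h3
        exact h3 (Finset.mem_univ v)
  have hterm : ∀ U ∈ (Finset.univ : Finset V).powerset,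
      (-(1 : ℚ)/2)^(n - U.card) * (if PU G U x then 1 else 0)
        = if Sx ⊆ U ∧ ∀ v ∈ U, v ∉ Bx then (-(1 : ℚ)/2)^(n - U.card) else 0 := by
    intro U _
    rw [mul_ite, mul_one, mul_zero, if_congr (hiff U) rfl rfl]
  rw [Finset.sum_congr rfl hterm, ← Finset.sum_filter]
  by_cases hSB : ∀ v ∈ Sx, v ∉ Bx
  case neg =>
    rw [if_neg hSB]
    push_neg at hSB
    obtain ⟨v, hvS, hvB⟩ := hSB
    have hempty : ((Finset.univ : Finset V).powerset.filter
        fun U => Sx ⊆ U ∧ ∀ v ∈ U, v ∉ Bx) = ∅ := by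
      rw [Finset.filter_eq_empty_iff]
      rintro U - ⟨h1, h2⟩
      exact h2 v (h1 hvS) hvB
    rw [hempty, Finset.sum_empty, zero_div]
  case pos =>
    rw [if_pos hSB]
    have hSxU : Sx ⊆ Finset.univ := Finset.subset_univ _
    have hBdisj : ∀ v ∈ Bx, v ∉ Sx := fun v hv hvS => hSB v hvS hv
    set t := (Finset.univ \ Sx) \ Bx with ht
    have hcards : Sx.card + ((Finset.univ : Finset V) \ Sx).card = n := by
      rw [Finset.card_sdiff_of_subset hSxU, Finset.card_univ]
      have := Finset.card_le_univ Sx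
      omega
    have hBsub : Bx ⊆ (Finset.univ : Finset V) \ Sx :=
      fun v hv => Finset.mem_sdiff.mpr ⟨Finset.mem_univ _, hBdisj v hv⟩
    have htcard : t.card + Bx.card = ((Finset.univ : Finset V) \ Sx).card := by
      rw [ht, Finset.card_sdiff_of_subset hBsub]
      have := Finset.card_le_card hBsub
      omega
    have hbij : ∑ U ∈ ((Finset.univ : Finset V).powerset.filter
          fun U => Sx ⊆ U ∧ ∀ v ∈ U, v ∉ Bx), (-(1 : ℚ)/2)^(n - U.card)
        = ∑ W ∈ t.powerset, (-(1 : ℚ)/2)^(n - (W.card + Sx.card)) := by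
      refine Finset.sum_nbij' (fun U => U \ Sx) (fun W => W ∪ Sx) ?_ ?_ ?_ ?_ ?_
      · intro U hU
        rw [Finset.mem_filter] at hU
        obtain ⟨-, hSxU', hUB⟩ := hU
        refine Finset.mem_powerset.mpr fun v hv => ?_
        rw [Finset.mem_sdiff] at hv
        rw [ht]
        exact Finset.mem_sdiff.mpr
          ⟨Finset.mem_sdiff.mpr ⟨Finset.mem_univ _, hv.2⟩, hUB v hv.1⟩
      · intro W hW
        have hWt := Finset.mem_powerset.mp hW
        rw [Finset.mem_filter]
        refine ⟨Finset.mem_powerset.mpr (Finset.subset_univ _),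
          Finset.subset_union_right, ?_⟩
        intro v hv
        rcases Finset.mem_union.mp hv with h | h
        · have h2 := hWt h
          rw [ht, Finset.mem_sdiff] at h2
          exact h2.2
        · exact hSB v h
      · intro U hU
        rw [Finset.mem_filter] at hU
        exact Finset.sdiff_union_of_subset hU.2.1
      · intro W hW
        have hWt := Finset.mem_powerset.mp hW
        have hdisj : Disjoint W Sx := by
          refine Finset.disjoint_left.mpr fun v hv hvS => ?_
          have h2 := hWt hv
          rw [ht, Finset.mem_sdiff, Finset.mem_sdiff] at h2
          exact h2.1.2 hvS
        show (W ∪ Sx) \ Sx = W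
        rw [Finset.union_sdiff_right, Finset.sdiff_eq_self_of_disjoint hdisj]
      · intro U hU
        rw [Finset.mem_filter] at hU
        show (-(1 : ℚ)/2)^(n - U.card) = (-(1 : ℚ)/2)^(n - ((U \ Sx).card + Sx.card))
        congr 1
        have h2 : (U \ Sx).card + Sx.card = U.card :=
          Finset.card_sdiff_add_card_eq_card hU.2.1
        have h3 : U.card ≤ n := Finset.card_le_univ U
        omega
    rw [hbij]
    have heval : ∀ W ∈ t.powerset, (-(1 : ℚ)/2)^(n - (W.card + Sx.card))
        = (-(1 : ℚ)/2)^(Bx.card) * (-(1 : ℚ)/2)^(t.card - W.card) := by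
      intro W hW
      rw [← pow_add]
      congr 1
      have hWc := Finset.card_le_card (Finset.mem_powerset.mp hW)
      omega
    rw [Finset.sum_congr rfl heval, ← Finset.mul_sum, sum_powerset_pow_sub]
    have h12 : (-(1 : ℚ)/2 + 1) = 1/2 := by norm_num
    rw [h12]
    have h2n : (2 : ℚ)^n = 2^(Sx.card) * (2^(Bx.card) * 2^(t.card)) := by
      rw [← pow_add, ← pow_add]
      congr 1
      omega
    rw [h2n, show (-(1 : ℚ)/2) = (-1) * (1/2) by norm_num, mul_pow]
    rw [div_pow, div_pow, one_pow, one_pow]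
    have hne : ∀ k : ℕ, ((2 : ℚ))^k ≠ 0 := fun k => pow_ne_zero k (by norm_num)
    field_simp

end RHS2

section RHS3
variable {V : Type*} [Fintype V] [DecidableEq V] (G : SimpleGraph V) [DecidableRel G.Adj]

lemma xind (x : V → ZMod 2) (v : V) :
    x v = if v ∈ (Finset.univ.filter fun w => x w ≠ 0) then (1 : ZMod 2) else 0 := by
  rcases zmod2_cases (x v) with h | h
  · rw [h, if_neg]
    simp [h]
  · rw [h, if_pos]
    simp [h]

lemma Beq (x : V → ZMod 2) :
    (Finset.univ.filter fun v => (∑ u ∈ G.neighborFinset v, x u) ≠ 0)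
      = badS G (Finset.univ.filter fun w => x w ≠ 0) := by
  unfold badS
  refine Finset.filter_congr fun v _ => ?_
  rw [Finset.sum_congr rfl fun u _ => xind x u,
    indicator_sum_nbS G (Finset.univ.filter fun w => x w ≠ 0) v,
    natCast_zmod2]
  by_cases h : Even (nbS G (Finset.univ.filter fun w => x w ≠ 0) v) <;> simp [h]

lemma xsum_eq :
    (∑ x : V → ZMod 2,
      (if ∀ v ∈ (Finset.univ.filter fun v => x v ≠ 0),
            v ∉ (Finset.univ.filter fun v => (∑ u ∈ G.neighborFinset v, x u) ≠ 0) then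
          (-1 : ℚ) ^ (Finset.univ.filter fun v => (∑ u ∈ G.neighborFinset v, x u) ≠ 0).card
            * 2 ^ (Finset.univ.filter fun v => x v ≠ 0).card
        else 0))
      = ∑ S ∈ (Finset.univ : Finset V).powerset, Cterm G S := by
  refine Finset.sum_nbij' (fun x => Finset.univ.filter fun w => x w ≠ 0)
    (fun S => fun v => if v ∈ S then (1 : ZMod 2) else 0) ?_ ?_ ?_ ?_ ?_
  · intro x _
    exact Finset.mem_powerset.mpr (Finset.subset_univ _)
  · intro S _
    exact Finset.mem_univ _
  · intro x _
    funext v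
    exact (xind x v).symm
  · intro S _
    ext v
    rw [Finset.mem_filter]
    by_cases h : v ∈ S <;> simp [h]
  · intro x _
    rw [Beq]
    set Sx := Finset.univ.filter fun w => x w ≠ 0 with hSx
    have hcond : (∀ v ∈ Sx, v ∉ badS G Sx) ↔ (∀ v ∈ Sx, Even (nbS G Sx v)) := by
      unfold badS
      constructor
      · intro H v hv
        have := H v hv
        simpa using this
      · intro H v hv
        simpa using H v hv
    rw [if_congr hcond rfl rfl]
    unfold Cterm
    rfl

lemma rhs_eq :
    ∑ U ∈ (Finset.univ : Finset V).powerset,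
        (-(1 : ℚ) / 2) ^ (Fintype.card V - U.card) * (2 : ℚ) ^ (corank (adjMatrixOn G U))
      = (∑ S ∈ (Finset.univ : Finset V).powerset, Cterm G S) / 2 ^ (Fintype.card V) := by
  calc ∑ U ∈ (Finset.univ : Finset V).powerset,
        (-(1 : ℚ) / 2) ^ (Fintype.card V - U.card) * (2 : ℚ) ^ (corank (adjMatrixOn G U))
      = ∑ U ∈ (Finset.univ : Finset V).powerset, ∑ x : V → ZMod 2,
          (-(1 : ℚ) / 2) ^ (Fintype.card V - U.card) * (if PU G U x then 1 else 0) := by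
        refine Finset.sum_congr rfl fun U _ => ?_
        rw [corank_card, ← Finset.sum_boole, Finset.mul_sum]
    _ = ∑ x : V → ZMod 2, ∑ U ∈ (Finset.univ : Finset V).powerset,
          (-(1 : ℚ) / 2) ^ (Fintype.card V - U.card) * (if PU G U x then 1 else 0) :=
        Finset.sum_comm
    _ = ∑ x : V → ZMod 2,
          (if ∀ v ∈ (Finset.univ.filter fun v => x v ≠ 0),
              v ∉ (Finset.univ.filter fun v => (∑ u ∈ G.neighborFinset v, x u) ≠ 0) then
            (-1 : ℚ) ^ (Finset.univ.filter fun v => (∑ u ∈ G.neighborFinset v, x u) ≠ 0).card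
              * 2 ^ (Finset.univ.filter fun v => x v ≠ 0).card
          else 0) / 2 ^ (Fintype.card V) :=
        Finset.sum_congr rfl fun x _ => per_x G x
    _ = (∑ S ∈ (Finset.univ : Finset V).powerset, Cterm G S) / 2 ^ (Fintype.card V) := by
        rw [← Finset.sum_div, xsum_eq]
end RHS3

theorem phi_eq_psi {V : Type*} [Fintype V] [DecidableEq V]
    (G : SimpleGraph V) [DecidableRel G.Adj] :
    (2 : ℚ) ^ (-(3 * (Fintype.card V : ℤ))) *
      ∑ E' ∈ G.edgeFinset.powerset, (-2 : ℚ) ^ E'.card * (chi3 E' : ℚ)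
    =
    (2 : ℚ) ^ (-(2 * (Fintype.card V : ℤ))) *
      ∑ U ∈ (Finset.univ : Finset V).powerset,
        (-(1 : ℚ) / 2) ^ (Fintype.card V - U.card) *
          (2 : ℚ) ^ corank (adjMatrixOn G U) := by
  rw [lhs_eq, rhs_eq]
  set n := Fintype.card V
  set C := ∑ S ∈ (Finset.univ : Finset V).powerset, Cterm G S
  have key : (2 : ℚ) ^ (-(3 * (n : ℤ))) = 2 ^ (-(2 * (n : ℤ))) * 2 ^ (-(n : ℤ)) := by
    rw [← zpow_add₀ (by norm_num : (2 : ℚ) ≠ 0)]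
    congr 1
    ring
  rw [key, div_eq_mul_inv, show ((2 : ℚ) ^ n)⁻¹ = 2 ^ (-(n : ℤ)) by
    rw [← zpow_natCast (2 : ℚ) n, ← zpow_neg]]
  ring
end

section
/- Let G be a finite simple graph with vertex set V(G) and edge set E(G), and define φ(G) = 2^{-3|V(G)|} · Σ_{E' ⊆ E(G)} (-2)^{|E'|} · χ₃(G|_{E'}). Then φ(G) = 2^{-3|V(G)|} · Σ_U (-1)^{|E(U, V(G)∖U)|} · 2^{|U|}, where the sum is over all subsets U ⊆ V(G) such that the induced subgraph G|_U is Eulerian, and E(U, V(G)∖U) denotes the set of edges of G with one endpoint in U and the other in V(G)∖U. -/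
open Finset

/-- The set `E(U, V(G) \ U)` of edges of `G` with exactly one endpoint in `U`. -/
def cutEdges {V : Type*} [Fintype V] [DecidableEq V] (G : SimpleGraph V)
    [DecidableRel G.Adj] (U : Finset V) : Finset (Sym2 V) :=
  G.edgeFinset.filter (fun e => ∃ a b : V, e = s(a, b) ∧ a ∈ U ∧ b ∉ U)

/-- The induced subgraph `G|_U` is Eulerian: every vertex of `G|_U` has even
degree in `G|_U`. -/
def IsEulerianInduced {V : Type*} [Fintype V] [DecidableEq V] (G : SimpleGraph V)
    [DecidableRel G.Adj] (U : Finset V) : Prop :=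
  ∀ i ∈ U, Even ((U.filter (fun j => G.Adj i j)).card)

instance {V : Type*} [Fintype V] [DecidableEq V] (G : SimpleGraph V)
    [DecidableRel G.Adj] : DecidablePred (IsEulerianInduced G) := by
  unfold IsEulerianInduced; infer_instance

section Aux

set_option linter.unusedSectionVars false
set_option linter.unreachableTactic false
set_option linter.unusedTactic false

variable {V : Type*} [Fintype V] [DecidableEq V] (G : SimpleGraph V) [DecidableRel G.Adj]

/-- The set of edges of `G` that are bichromatic under `f`. -/
def Dfin (f : V → Fin 3) : Finset (Sym2 V) :=
  G.edgeFinset.filter (fun e => ∀ a b : V, e = s(a, b) → f a ≠ f b)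

/-- The coloring with color `1` on `W`, `2` on `U \ W` and `0` elsewhere. -/
def fUW (U W : Finset V) : V → Fin 3 := fun v => if v ∈ W then 1 else if v ∈ U then 2 else 0

/-- The set of edges of `G` inside `U` joining `W` and `U \ W`. -/
def cutIn (U W : Finset V) : Finset (Sym2 V) :=
  G.edgeFinset.filter (fun e => ∃ a b : V, e = s(a, b) ∧ a ∈ W ∧ b ∈ U \ W)

lemma myDC (A B : Finset V) (hAB : Disjoint A B) :
    (G.edgeFinset.filter (fun e => ∃ a b : V, e = s(a, b) ∧ a ∈ A ∧ b ∈ B)).card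
      = ∑ a ∈ A, (B.filter (G.Adj a)).card := by
  have h1 : ∑ a ∈ A, (B.filter (G.Adj a)).card
      = ((A ×ˢ B).filter (fun p => G.Adj p.1 p.2)).card := by
    rw [Finset.card_filter, Finset.sum_product]
    refine Finset.sum_congr rfl fun a _ => ?_
    rw [Finset.card_filter]
  rw [h1]
  apply (Finset.card_bij (fun (p : V × V) _ => s(p.1, p.2)) ?_ ?_ ?_).symm
  · rintro ⟨a, b⟩ hp
    simp only [mem_filter, mem_product] at hp
    simp only [mem_filter, SimpleGraph.mem_edgeFinset, SimpleGraph.mem_edgeSet]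
    exact ⟨hp.2, a, b, rfl, hp.1.1, hp.1.2⟩
  · rintro ⟨a, b⟩ hp ⟨c, d⟩ hq h
    simp only [mem_filter, mem_product] at hp hq
    rw [Sym2.eq_iff] at h
    rcases h with ⟨rfl, rfl⟩ | ⟨rfl, rfl⟩
    · rfl
    · exact absurd hp.1.1 (Finset.disjoint_right.mp hAB hq.1.2)
  · intro e he
    simp only [mem_filter, SimpleGraph.mem_edgeFinset, SimpleGraph.mem_edgeSet] at he
    obtain ⟨hE, a, b, rfl, ha, hb⟩ := he
    exact ⟨(a, b), by simp [ha, hb, (SimpleGraph.mem_edgeSet G).mp hE], rfl⟩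

lemma myEven (W : Finset V) :
    Even (∑ v ∈ W, ((W.filter (G.Adj v)).card)) := by
  classical
  let H : SimpleGraph V :=
    { Adj := fun v w => v ∈ W ∧ w ∈ W ∧ G.Adj v w
      symm := by constructor; rintro v w ⟨h1, h2, h3⟩; exact ⟨h2, h1, h3.symm⟩
      loopless := by constructor; rintro v ⟨_, _, h⟩; exact G.ne_of_adj h rfl }
  haveI : DecidableRel H.Adj := fun v w => inferInstanceAs (Decidable (v ∈ W ∧ w ∈ W ∧ G.Adj v w))
  have hdeg : ∀ v ∈ W, (W.filter (G.Adj v)).card = H.degree v := by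
    intro v hv
    rw [SimpleGraph.degree]
    congr 1
    ext w
    simp only [SimpleGraph.mem_neighborFinset, mem_filter]
    change _ ↔ v ∈ W ∧ w ∈ W ∧ G.Adj v w
    tauto
  rw [Finset.sum_congr rfl hdeg]
  have : ∑ v ∈ W, H.degree v = ∑ v, H.degree v := by
    apply Finset.sum_subset (Finset.subset_univ W)
    intro v _ hv
    rw [SimpleGraph.degree, Finset.card_eq_zero, Finset.eq_empty_iff_forall_notMem]
    intro w hw
    rw [SimpleGraph.mem_neighborFinset] at hw
    exact hv hw.1
  rw [this, SimpleGraph.sum_degrees_eq_twice_card_edges]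
  exact even_two_mul _

lemma sum_pow_powerset {α : Type*} [DecidableEq α] (t : Finset α) (x : ℚ) :
    ∑ s ∈ t.powerset, x ^ s.card = (x + 1) ^ t.card := by
  have h := Finset.prod_add (fun _ : α => x) (fun _ => (1:ℚ)) t
  simp only [Finset.prod_const, one_pow, mul_one] at h
  exact h.symm

lemma stepA :
    ∑ E' ∈ G.edgeFinset.powerset, (-2 : ℚ) ^ E'.card * (chi3 E' : ℚ)
      = ∑ f : V → Fin 3, (-1 : ℚ) ^ (Dfin G f).card := by
  have hchi : ∀ E' : Finset (Sym2 V), (chi3 E' : ℚ)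
      = ∑ f : V → Fin 3, (if (∀ a b : V, s(a, b) ∈ E' → f a ≠ f b) then (1:ℚ) else 0) := by
    intro E'
    rw [chi3, Finset.card_filter]
    push_cast
    rfl
  simp only [hchi, Finset.mul_sum]
  rw [Finset.sum_comm]
  refine Finset.sum_congr rfl fun f _ => ?_
  simp only [mul_ite, mul_one, mul_zero]
  rw [← Finset.sum_filter]
  have hset : (G.edgeFinset.powerset.filter (fun E' => ∀ a b : V, s(a,b) ∈ E' → f a ≠ f b))
      = (Dfin G f).powerset := by
    ext E'
    simp only [mem_filter, mem_powerset, Dfin]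
    constructor
    · rintro ⟨hsub, hcond⟩ e he
      refine mem_filter.mpr ⟨hsub he, fun a b hab => hcond a b ?_⟩
      rwa [← hab]
    · intro h
      refine ⟨fun e he => (mem_filter.mp (h he)).1, fun a b hab => ?_⟩
      exact (mem_filter.mp (h hab)).2 a b rfl
  rw [hset, sum_pow_powerset]
  norm_num

lemma stepB (F : (V → Fin 3) → ℚ) :
    ∑ f : V → Fin 3, F f
      = ∑ U ∈ (Finset.univ : Finset V).powerset, ∑ W ∈ U.powerset, F (fUW U W) := by
  have h3 : ∀ x : Fin 3, x = 0 ∨ x = 1 ∨ x = 2 := by decide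
  rw [← Finset.sum_sigma (Finset.univ.powerset) (fun U => U.powerset)
    (fun x => F (fUW x.1 x.2))]
  refine Finset.sum_nbij'
    (i := fun f => (⟨univ.filter (fun v => f v ≠ 0), univ.filter (fun v => f v = 1)⟩ :
      Σ _ : Finset V, Finset V))
    (j := fun p => fUW p.1 p.2) ?_ ?_ ?_ ?_ ?_
  · intro f _
    simp only [Finset.mem_sigma, Finset.mem_powerset]
    refine ⟨Finset.subset_univ _, fun v hv => ?_⟩
    simp only [mem_filter] at hv ⊢
    refine ⟨Finset.mem_univ _, ?_⟩
    rw [hv.2]; decide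
  · intro p _; exact Finset.mem_univ _
  · intro f _
    funext v
    simp only [fUW, mem_filter, mem_univ, true_and]
    rcases h3 (f v) with h | h | h <;> rw [h] <;> simp [h]
  · rintro ⟨U, W⟩ hp
    simp only [Finset.mem_sigma, Finset.mem_powerset] at hp
    have hU : univ.filter (fun v => fUW U W v ≠ 0) = U := by
      ext v
      simp only [mem_filter, mem_univ, true_and]; simp only [fUW]
      by_cases hw : v ∈ W
      · simp [hw, hp.2 hw]
      · by_cases hu : v ∈ U <;> simp [hw, hu] <;> decide
    have hW : univ.filter (fun v => fUW U W v = 1) = W := by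
      ext v
      simp only [mem_filter, mem_univ, true_and, fUW]
      by_cases hw : v ∈ W <;> by_cases hu : v ∈ U <;> simp [hw, hu]
    exact Sigma.ext hU (heq_of_eq hW)
  · intro f _
    have : fUW (univ.filter (fun v => f v ≠ 0)) (univ.filter (fun v => f v = 1)) = f := by
      funext v
      simp only [fUW, mem_filter, mem_univ, true_and]
      rcases h3 (f v) with h | h | h <;> rw [h] <;> simp [h]
    rw [this]

lemma sym2_exists_iff {P Q : V → Prop} (x y : V) :
    (∃ a b : V, s(x, y) = s(a, b) ∧ P a ∧ Q b) ↔ (P x ∧ Q y) ∨ (P y ∧ Q x) := by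
  constructor
  · rintro ⟨a, b, hab, hp, hq⟩
    rw [Sym2.eq_iff] at hab
    rcases hab with ⟨rfl, rfl⟩ | ⟨rfl, rfl⟩
    · exact Or.inl ⟨hp, hq⟩
    · exact Or.inr ⟨hp, hq⟩
  · rintro (⟨hp, hq⟩ | ⟨hp, hq⟩)
    · exact ⟨x, y, rfl, hp, hq⟩
    · exact ⟨y, x, Sym2.eq_swap, hp, hq⟩

lemma sym2_forall_ne (f : V → Fin 3) (x y : V) :
    (∀ a b : V, s(x, y) = s(a, b) → f a ≠ f b) ↔ f x ≠ f y := by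
  constructor
  · exact fun h => h x y rfl
  · intro h a b hab
    rw [Sym2.eq_iff] at hab
    rcases hab with ⟨rfl, rfl⟩ | ⟨rfl, rfl⟩
    · exact h
    · exact h.symm

lemma fUW_ne_iff (U W : Finset V) (hWU : W ⊆ U) (x y : V) :
    (fUW U W x ≠ fUW U W y) ↔
      (((x ∈ U ∧ y ∉ U) ∨ (y ∈ U ∧ x ∉ U)) ∨
       ((x ∈ W ∧ y ∈ U ∧ y ∉ W) ∨ (y ∈ W ∧ x ∈ U ∧ x ∉ W))) := by
  by_cases hxw : x ∈ W <;> by_cases hyw : y ∈ W <;>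
  by_cases hxu : x ∈ U <;> by_cases hyu : y ∈ U <;>
    simp [fUW, hxw, hyw, hxu, hyu] <;>
    first
      | exact absurd (hWU hxw) hxu
      | exact absurd (hWU hyw) hyu
      | tauto
      | decide

set_option maxHeartbeats 1000000 in
lemma dfin_eq_union (U W : Finset V) (hWU : W ⊆ U) :
    Dfin G (fUW U W) = cutEdges G U ∪ cutIn G U W := by
  ext e
  induction e using Sym2.ind with
  | _ x y =>
    simp only [Dfin, cutEdges, cutIn, Finset.mem_union, Finset.mem_filter]
    rw [sym2_forall_ne, fUW_ne_iff U W hWU, sym2_exists_iff, sym2_exists_iff]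
    simp only [Finset.mem_sdiff]
    tauto

lemma cut_disj (U W : Finset V) (hWU : W ⊆ U) :
    Disjoint (cutEdges G U) (cutIn G U W) := by
  rw [Finset.disjoint_left]
  intro e
  induction e using Sym2.ind with
  | _ x y =>
    simp only [cutEdges, cutIn, Finset.mem_filter, sym2_exists_iff, Finset.mem_sdiff]
    rintro ⟨-, h1⟩ ⟨-, h2⟩
    rcases h1 with ⟨hxu, hyu⟩ | ⟨hyu, hxu⟩ <;> rcases h2 with ⟨hw, hu, -⟩ | ⟨hw, hu, -⟩ <;>
      first
        | exact hyu hu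
        | exact hxu hu
        | exact hyu (hWU hw)
        | exact hxu (hWU hw)

lemma dfin_card (U W : Finset V) (hWU : W ⊆ U) :
    (Dfin G (fUW U W)).card = (cutEdges G U).card + (cutIn G U W).card := by
  rw [dfin_eq_union G U W hWU, Finset.card_union_of_disjoint (cut_disj G U W hWU)]

lemma cutIn_parity (U W : Finset V) (hWU : W ⊆ U) :
    (-1 : ℚ) ^ (cutIn G U W).card
      = ∏ v ∈ W, (-1 : ℚ) ^ (U.filter (fun j => G.Adj v j)).card := by
  rw [Finset.prod_pow_eq_pow_sum]
  have hsplit : ∀ v : V, (U.filter (fun j => G.Adj v j)).card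
      = ((U \ W).filter (G.Adj v)).card + (W.filter (G.Adj v)).card := by
    intro v
    rw [← Finset.card_union_of_disjoint]
    · congr 1
      rw [← Finset.filter_union, Finset.sdiff_union_of_subset hWU]
    · exact Finset.disjoint_filter_filter Finset.sdiff_disjoint
  rw [Finset.sum_congr rfl (fun v _ => hsplit v), Finset.sum_add_distrib]
  have hDC : (cutIn G U W).card = ∑ v ∈ W, ((U \ W).filter (G.Adj v)).card := by
    rw [cutIn, myDC G W (U \ W) Finset.disjoint_sdiff]
  rw [← hDC, pow_add, (myEven G W).neg_one_pow, mul_one]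

lemma stepC (U W : Finset V) (hWU : W ⊆ U) :
    (-1 : ℚ) ^ (Dfin G (fUW U W)).card
      = (-1 : ℚ) ^ (cutEdges G U).card
        * ∏ v ∈ W, (-1 : ℚ) ^ (U.filter (fun j => G.Adj v j)).card := by
  rw [dfin_card G U W hWU, pow_add, cutIn_parity G U W hWU]

end Aux

theorem phi_eq_eulerian_sum {V : Type*} [Fintype V] [DecidableEq V]
    (G : SimpleGraph V) [DecidableRel G.Adj] :
    (2 : ℚ) ^ (-(3 * (Fintype.card V : ℤ))) *
      ∑ E' ∈ G.edgeFinset.powerset, (-2 : ℚ) ^ E'.card * (chi3 E' : ℚ)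
    =
    (2 : ℚ) ^ (-(3 * (Fintype.card V : ℤ))) *
      ∑ U ∈ (Finset.univ : Finset V).powerset.filter (IsEulerianInduced G),
        (-1 : ℚ) ^ (cutEdges G U).card * (2 : ℚ) ^ U.card := by
  congr 1
  rw [stepA, stepB (fun f => (-1 : ℚ) ^ (Dfin G f).card), Finset.sum_filter]
  refine Finset.sum_congr rfl fun U _ => ?_
  rw [Finset.sum_congr rfl (fun W hW => stepC G U W (Finset.mem_powerset.mp hW))]
  rw [← Finset.mul_sum]
  have hpow : ∑ W ∈ U.powerset, ∏ v ∈ W, (-1 : ℚ) ^ (U.filter (fun j => G.Adj v j)).card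
      = ∏ v ∈ U, ((-1 : ℚ) ^ (U.filter (fun j => G.Adj v j)).card + 1) := by
    have h := Finset.prod_add (fun v => (-1 : ℚ) ^ (U.filter (fun j => G.Adj v j)).card)
      (fun _ => (1:ℚ)) U
    simp only [Finset.prod_const_one, mul_one] at h
    exact h.symm
  rw [hpow]
  by_cases hE : IsEulerianInduced G U
  · rw [if_pos hE]
    congr 1
    have h2 : ∀ v ∈ U, ((-1 : ℚ) ^ (U.filter (fun j => G.Adj v j)).card + 1) = 2 := by
      intro v hv
      rw [(hE v hv).neg_one_pow]
      norm_num
    rw [Finset.prod_congr rfl h2, Finset.prod_const]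
  · rw [if_neg hE]
    rw [IsEulerianInduced] at hE
    push_neg at hE
    obtain ⟨v, hv, hodd⟩ := hE
    rw [Finset.prod_eq_zero hv, mul_zero]
    rw [(Nat.not_even_iff_odd.mp hodd).neg_one_pow]
    ring
end

section
/- Let G be a finite simple graph with n = |V(G)| vertices, and define ψ(G) = 2^{-2n} · Σ_{U ⊆ V(G)} (-1/2)^{n-|U|} · 2^{corank(A(G|_U))}, where A(G|_U) is the adjacency matrix over 𝔽₂ of the induced subgraph G|_U. Then ψ(G) = 2^{-3n} · Σ_U (-1)^{|E(U, V(G)∖U)|} · 2^{|U|}, where the sum is over all subsets U ⊆ V(G) such that the induced subgraph G|_U is Eulerian, and E(U, V(G)∖U) denotes the set of edges of G with one endpoint in U and the other in V(G)∖U. -/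
open Finset

set_option linter.unusedSectionVars false

section Aux

variable {V : Type*} [Fintype V] [DecidableEq V] (G : SimpleGraph V) [DecidableRel G.Adj]

/-- The indicator vector of `S` inside `U`. -/
def indVec (S : Finset V) (U : Finset V) : U → ZMod 2 := fun j => if (j : V) ∈ S then 1 else 0

lemma mulVec_ind (S U : Finset V) (hS : S ⊆ U) (i : U) :
    (adjMatrixOn G U).mulVec (indVec S U) i
      = ((S.filter (fun j => G.Adj (i : V) j)).card : ZMod 2) := by
  classical
  have h1 : (adjMatrixOn G U).mulVec (indVec S U) i
      = ∑ j : U, (if G.Adj (i:V) (j:V) ∧ (j:V) ∈ S then (1:ZMod 2) else 0) := by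
    simp only [Matrix.mulVec, dotProduct, adjMatrixOn, indVec, Matrix.of_apply]
    exact Finset.sum_congr rfl fun x _ => by
      by_cases h : G.Adj (↑i) (↑x) <;> by_cases h2 : (↑x : V) ∈ S <;> simp [h, h2]
  rw [h1, Finset.sum_boole]
  congr 1
  rw [Finset.univ_eq_attach, Finset.filter_attach (fun v => G.Adj (↑i) v ∧ v ∈ S) U,
    Finset.card_map, Finset.card_attach]
  congr 1
  ext x
  simp only [Finset.mem_filter]
  constructor
  · rintro ⟨hU, ha, hs⟩; exact ⟨hs, ha⟩
  · rintro ⟨hs, ha⟩; exact ⟨hS hs, ha, hs⟩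

lemma ker_iff (S U : Finset V) (hS : S ⊆ U) :
    (adjMatrixOn G U).mulVecLin (indVec S U) = 0
      ↔ ∀ i ∈ U, Even ((S.filter (fun j => G.Adj i j)).card) := by
  rw [Matrix.mulVecLin_apply, funext_iff]
  constructor
  · intro h i hi
    have := h ⟨i, hi⟩
    rw [mulVec_ind G S U hS] at this
    rw [even_iff_two_dvd, ← ZMod.natCast_eq_zero_iff]
    simpa using this
  · intro h i
    rw [mulVec_ind G S U hS]
    simp only [Pi.zero_apply]
    rw [ZMod.natCast_eq_zero_iff, ← even_iff_two_dvd]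
    exact h i i.2

/-- The subset of `U` determined by a `𝔽₂`-vector indexed by `U`. -/
def vecSet (U : Finset V) (x : U → ZMod 2) : Finset V :=
  (U.attach.filter (fun j => x j = 1)).image Subtype.val

lemma vecSet_subset (U : Finset V) (x : U → ZMod 2) : vecSet U x ⊆ U := by
  intro v hv
  simp only [vecSet, Finset.mem_image, Finset.mem_filter, Finset.mem_attach, true_and] at hv
  obtain ⟨j, _, rfl⟩ := hv
  exact j.2

lemma ind_vecSet (U : Finset V) (x : U → ZMod 2) : indVec (vecSet U x) U = x := by
  funext j
  have hx : x j = 0 ∨ x j = 1 := by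
    have : ∀ a : ZMod 2, a = 0 ∨ a = 1 := by decide
    exact this _
  have hmem : (↑j ∈ vecSet U x) ↔ x j = 1 := by
    simp only [vecSet, Finset.mem_image, Finset.mem_filter, Finset.mem_attach, true_and]
    constructor
    · rintro ⟨j', hj', h⟩
      rwa [Subtype.ext h] at hj'
    · intro h; exact ⟨j, h, rfl⟩
  simp only [indVec]
  rcases hx with h | h <;> rw [h] <;> simp [hmem, h]

lemma vecSet_ind (S U : Finset V) (hS : S ⊆ U) : vecSet U (indVec S U) = S := by
  ext v
  simp only [vecSet, Finset.mem_image, Finset.mem_filter, Finset.mem_attach, true_and, indVec]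
  constructor
  · rintro ⟨j, hj, rfl⟩
    by_contra h
    simp [h] at hj
  · intro hv
    exact ⟨⟨v, hS hv⟩, by simp [hv], rfl⟩

lemma ker_card (U : Finset V) :
    (2 : ℚ) ^ corank (adjMatrixOn G U)
      = ((U.powerset.filter
          (fun S => ∀ i ∈ U, Even ((S.filter (fun j => G.Adj i j)).card))).card : ℚ) := by
  classical
  haveI : DecidablePred (· ∈ LinearMap.ker (adjMatrixOn G U).mulVecLin) :=
    fun x => decidable_of_iff _ (LinearMap.mem_ker (f := (adjMatrixOn G U).mulVecLin)).symm
  have h1 : Fintype.card ↥(LinearMap.ker (adjMatrixOn G U).mulVecLin)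
      = 2 ^ corank (adjMatrixOn G U) := by
    have := Module.card_eq_pow_finrank (K := ZMod 2)
      (V := ↥(LinearMap.ker (adjMatrixOn G U).mulVecLin))
    rwa [ZMod.card] at this
  have h2 : Fintype.card ↥(LinearMap.ker (adjMatrixOn G U).mulVecLin)
      = (Finset.univ.filter
          (fun x : U → ZMod 2 => (adjMatrixOn G U).mulVecLin x = 0)).card := by
    rw [Fintype.card_subtype]
    congr 1
    ext x
    simp only [Finset.mem_filter, Finset.mem_univ, true_and]
    exact LinearMap.mem_ker
  have h3 : (Finset.univ.filter
          (fun x : U → ZMod 2 => (adjMatrixOn G U).mulVecLin x = 0)).card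
      = (U.powerset.filter
          (fun S => ∀ i ∈ U, Even ((S.filter (fun j => G.Adj i j)).card))).card := by
    apply Finset.card_bij' (fun x _ => vecSet U x) (fun S _ => indVec S U)
    · intro x hx
      simp only [Finset.mem_filter, Finset.mem_univ, true_and] at hx
      simp only [Finset.mem_filter, Finset.mem_powerset]
      refine ⟨vecSet_subset U x, ?_⟩
      rw [← ker_iff G _ U (vecSet_subset U x)]
      rw [ind_vecSet]
      exact hx
    · intro S hS
      simp only [Finset.mem_filter, Finset.mem_powerset] at hS
      simp only [Finset.mem_filter, Finset.mem_univ, true_and]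
      exact (ker_iff G S U hS.1).2 hS.2
    · intro x _
      exact ind_vecSet U x
    · intro S hS
      simp only [Finset.mem_filter, Finset.mem_powerset] at hS
      exact vecSet_ind S U hS.1
  rw [← h3, ← h2, h1]
  push_cast
  ring

lemma cut_card (S : Finset V) :
    (cutEdges G S).card = ∑ i ∈ Finset.univ \ S, (S.filter (fun j => G.Adj i j)).card := by
  classical
  have h1 : (cutEdges G S).card
      = (((Finset.univ \ S) ×ˢ S).filter (fun p => G.Adj p.1 p.2)).card := by
    rw [eq_comm]
    apply Finset.card_bij (fun p _ => s(p.1, p.2))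
    · rintro ⟨i, j⟩ hp
      simp only [Finset.mem_filter, Finset.mem_product, Finset.mem_sdiff, Finset.mem_univ,
        true_and] at hp
      obtain ⟨⟨hiS, hjS⟩, hadj⟩ := hp
      simp only [cutEdges, Finset.mem_filter, SimpleGraph.mem_edgeFinset]
      exact ⟨hadj, j, i, Sym2.eq_swap, hjS, hiS⟩
    · rintro ⟨i, j⟩ hp ⟨i', j'⟩ hp' heq
      simp only [Finset.mem_filter, Finset.mem_product, Finset.mem_sdiff, Finset.mem_univ,
        true_and] at hp hp'
      rw [Sym2.eq_iff] at heq
      rcases heq with ⟨rfl, rfl⟩ | ⟨rfl, rfl⟩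
      · rfl
      · exact absurd hp'.1.2 hp.1.1
    · intro e he
      simp only [cutEdges, Finset.mem_filter, SimpleGraph.mem_edgeFinset] at he
      obtain ⟨hadj, a, b, rfl, haS, hbS⟩ := he
      refine ⟨(b, a), ?_, Sym2.eq_swap⟩
      simp only [Finset.mem_filter, Finset.mem_product, Finset.mem_sdiff, Finset.mem_univ,
        true_and]
      rw [SimpleGraph.mem_edgeSet] at hadj
      exact ⟨⟨hbS, haS⟩, hadj.symm⟩
  rw [h1, Finset.card_eq_sum_card_fiberwise (f := Prod.fst) (t := Finset.univ \ S)
    (fun p hp => by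
      simp only [Finset.mem_coe, Finset.mem_filter, Finset.mem_product] at hp
      exact hp.1.1)]
  refine Finset.sum_congr rfl fun i hi => ?_
  apply Finset.card_bij (fun p _ => p.2)
  · rintro ⟨a, j⟩ hp
    simp only [Finset.mem_filter, Finset.mem_product] at hp ⊢
    obtain ⟨⟨⟨_, hjS⟩, hadj⟩, rfl⟩ := hp
    exact ⟨hjS, hadj⟩
  · rintro ⟨a, j⟩ hp ⟨a', j'⟩ hp' heq
    simp only [Finset.mem_filter, Finset.mem_product] at hp hp'
    obtain ⟨-, rfl⟩ := hp
    obtain ⟨-, rfl⟩ := hp'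
    simp only [Prod.mk.injEq]
    exact ⟨trivial, heq⟩
  · intro j hj
    simp only [Finset.mem_filter] at hj
    refine ⟨(i, j), ?_, rfl⟩
    simp only [Finset.mem_filter, Finset.mem_product]
    exact ⟨⟨⟨hi, hj.1⟩, hj.2⟩, trivial⟩

lemma cut_parity (S : Finset V) :
    ((-1 : ℚ)) ^ (cutEdges G S).card
      = (-1) ^ (((Finset.univ \ S).filter
          (fun i => ¬ Even ((S.filter (fun j => G.Adj i j)).card))).card) := by
  classical
  rw [cut_card, ← Finset.prod_pow_eq_pow_sum]
  rw [← Finset.prod_filter_mul_prod_filter_not (Finset.univ \ S)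
    (fun i => Even ((S.filter (fun j => G.Adj i j)).card))]
  have h1 : ∏ i ∈ (Finset.univ \ S).filter
      (fun i => Even ((S.filter (fun j => G.Adj i j)).card)),
      ((-1 : ℚ)) ^ (S.filter (fun j => G.Adj i j)).card = 1 := by
    apply Finset.prod_eq_one
    intro i hi
    simp only [Finset.mem_filter] at hi
    exact hi.2.neg_one_pow
  have h2 : ∏ i ∈ (Finset.univ \ S).filter
      (fun i => ¬ Even ((S.filter (fun j => G.Adj i j)).card)),
      ((-1 : ℚ)) ^ (S.filter (fun j => G.Adj i j)).card
      = (-1) ^ (((Finset.univ \ S).filter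
          (fun i => ¬ Even ((S.filter (fun j => G.Adj i j)).card))).card) := by
    rw [← Finset.prod_const]
    apply Finset.prod_congr rfl
    intro i hi
    simp only [Finset.mem_filter] at hi
    exact (Nat.not_even_iff_odd.mp hi.2).neg_one_pow
  rw [h1, h2, one_mul]

lemma sum_pow_card {B : Finset V} (x : ℚ) :
    ∑ T ∈ B.powerset, x ^ T.card = (x + 1) ^ B.card := by
  calc ∑ T ∈ B.powerset, x ^ T.card
      = ∑ T ∈ B.powerset, (∏ _i ∈ T, x) * ∏ _i ∈ B \ T, (1:ℚ) := by
        simp [Finset.prod_const]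
    _ = ∏ _i ∈ B, (x + 1) := (Finset.prod_add _ _ _).symm
    _ = (x + 1) ^ B.card := by rw [Finset.prod_const]

lemma innerSumEuler (S : Finset V) :
    (∑ U ∈ (Finset.univ : Finset V).powerset,
      if S ⊆ U ∧ (∀ i ∈ U, Even ((S.filter (fun j => G.Adj i j)).card))
        then (-(1 : ℚ)/2) ^ (Fintype.card V - U.card) else 0)
    = if IsEulerianInduced G S then
        (-(1:ℚ)/2) ^ (Fintype.card V - S.card) *
          (-1) ^ (((Finset.univ \ S).filter
            (fun i => Even ((S.filter (fun j => G.Adj i j)).card))).card)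
      else 0 := by
  classical
  by_cases hE : IsEulerianInduced G S
  · rw [if_pos hE]
    set B := (Finset.univ \ S).filter
      (fun i => Even ((S.filter (fun j => G.Adj i j)).card)) with hB
    rw [← Finset.sum_filter]
    have key : ∑ U ∈ (Finset.univ : Finset V).powerset.filter
        (fun U => S ⊆ U ∧ ∀ i ∈ U, Even ((S.filter (fun j => G.Adj i j)).card)),
        (-(1:ℚ)/2) ^ (Fintype.card V - U.card)
        = ∑ T ∈ B.powerset,
            (-(1:ℚ)/2) ^ (Fintype.card V - S.card) * (-2) ^ T.card := by
      apply Finset.sum_nbij' (i := fun U => U \ S) (j := fun T => S ∪ T)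
      · intro U hU
        simp only [Finset.mem_filter, Finset.mem_powerset] at hU
        obtain ⟨-, hSU, hcond⟩ := hU
        simp only [Finset.mem_powerset]
        intro v hv
        simp only [Finset.mem_sdiff] at hv
        simp only [hB, Finset.mem_filter, Finset.mem_sdiff, Finset.mem_univ, true_and]
        exact ⟨hv.2, hcond v hv.1⟩
      · intro T hT
        simp only [Finset.mem_powerset] at hT
        simp only [Finset.mem_filter, Finset.mem_powerset]
        refine ⟨Finset.subset_univ _, Finset.subset_union_left, ?_⟩
        intro i hi
        rcases Finset.mem_union.mp hi with hiS | hiT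
        · exact hE i hiS
        · have := hT hiT
          simp only [hB, Finset.mem_filter] at this
          exact this.2
      · intro U hU
        simp only [Finset.mem_filter, Finset.mem_powerset] at hU
        exact Finset.union_sdiff_of_subset hU.2.1
      · intro T hT
        simp only [Finset.mem_powerset] at hT
        apply Finset.union_sdiff_cancel_left
        rw [Finset.disjoint_left]
        intro v hvS hvT
        have := hT hvT
        simp only [hB, Finset.mem_filter, Finset.mem_sdiff, Finset.mem_univ, true_and] at this
        exact this.1 hvS
      · intro U hU
        simp only [Finset.mem_filter, Finset.mem_powerset] at hU
        obtain ⟨-, hSU, hcond⟩ := hU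
        have hdisj : Disjoint S (U \ S) := Finset.disjoint_sdiff
        have hcard : (S ∪ (U \ S)).card = S.card + (U \ S).card :=
          Finset.card_union_of_disjoint hdisj
        rw [Finset.union_sdiff_of_subset hSU] at hcard
        have hle : U.card ≤ Fintype.card V := Finset.card_le_univ U
        have h2 : Fintype.card V - U.card = (Fintype.card V - S.card) - (U \ S).card := by
          omega
        rw [h2]
        have hle2 : (U \ S).card ≤ Fintype.card V - S.card := by omega
        rw [pow_sub₀ _ (by norm_num) hle2]
        rw [div_eq_mul_inv]
        congr 1
        rw [← inv_pow]
        norm_num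
    rw [key, ← Finset.mul_sum, sum_pow_card]
    norm_num
  · rw [if_neg hE]
    apply Finset.sum_eq_zero
    intro U hU
    rw [if_neg]
    rintro ⟨hSU, hcond⟩
    exact hE fun i hi => hcond i (hSU hi)

lemma alg_lemma (a b o n : ℕ) (h : a + (b + o) = n) :
    (2:ℚ) ^ (-(2 * (n:ℤ))) * ((-(1:ℚ)/2) ^ (n - a) * (-1) ^ b)
      = 2 ^ (-(3 * (n:ℤ))) * ((-1) ^ o * 2 ^ a) := by
  subst h
  have h1 : a + (b + o) - a = b + o := by omega
  rw [h1]
  have hc : (-(1:ℚ)/2) = (-1) * 2⁻¹ := by norm_num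
  rw [hc, mul_pow]
  have hsign : ((-1:ℚ)) ^ (b + o) * (-1) ^ b = (-1) ^ o := by
    rw [← pow_add, show b + o + b = 2 * b + o by omega, pow_add, pow_mul]
    norm_num
  have h2 : (2:ℚ) ≠ 0 := two_ne_zero
  have e1 : ((2:ℚ)⁻¹) ^ (b + o) = (2:ℚ) ^ (-((b + o : ℕ) : ℤ)) := by
    rw [zpow_neg, zpow_natCast, inv_pow]
  have e2 : (2:ℚ) ^ a = (2:ℚ) ^ ((a : ℤ)) := by rw [zpow_natCast]
  calc (2:ℚ) ^ (-(2 * ((a + (b + o) : ℕ) : ℤ))) * ((-1) ^ (b + o) * (2:ℚ)⁻¹ ^ (b + o) * (-1) ^ b)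
      = ((-1:ℚ)) ^ (b + o) * (-1) ^ b *
          ((2:ℚ) ^ (-(2 * ((a + (b + o) : ℕ) : ℤ))) * (2:ℚ) ^ (-((b + o : ℕ) : ℤ))) := by
        rw [e1]; ring
    _ = ((-1:ℚ)) ^ o * ((2:ℚ) ^ (-(3 * ((a + (b + o) : ℕ) : ℤ))) * (2:ℚ) ^ ((a:ℤ))) := by
        rw [hsign, ← zpow_add₀ h2, ← zpow_add₀ h2]
        congr 1
        push_cast
        ring
    _ = 2 ^ (-(3 * ((a + (b + o) : ℕ) : ℤ))) * ((-1) ^ o * 2 ^ a) := by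
        rw [e2]; ring

end Aux

theorem psi_eq_eulerian_sum {V : Type*} [Fintype V] [DecidableEq V]
    (G : SimpleGraph V) [DecidableRel G.Adj] :
    (2 : ℚ) ^ (-(2 * (Fintype.card V : ℤ))) *
      ∑ U ∈ (Finset.univ : Finset V).powerset,
        (-(1 : ℚ) / 2) ^ (Fintype.card V - U.card) *
          (2 : ℚ) ^ corank (adjMatrixOn G U)
    =
    (2 : ℚ) ^ (-(3 * (Fintype.card V : ℤ))) *
      ∑ U ∈ (Finset.univ : Finset V).powerset.filter (IsEulerianInduced G),
        (-1 : ℚ) ^ (cutEdges G U).card * (2 : ℚ) ^ U.card := by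
  classical
  calc (2 : ℚ) ^ (-(2 * (Fintype.card V : ℤ))) *
      ∑ U ∈ (Finset.univ : Finset V).powerset,
        (-(1 : ℚ) / 2) ^ (Fintype.card V - U.card) * (2 : ℚ) ^ corank (adjMatrixOn G U)
      = (2 : ℚ) ^ (-(2 * (Fintype.card V : ℤ))) *
        ∑ U ∈ (Finset.univ : Finset V).powerset,
          ∑ S ∈ (Finset.univ : Finset V).powerset,
            (if S ⊆ U ∧ (∀ i ∈ U, Even ((S.filter (fun j => G.Adj i j)).card))
              then (-(1:ℚ)/2) ^ (Fintype.card V - U.card) else 0) := by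
        congr 1
        refine Finset.sum_congr rfl fun U _ => ?_
        rw [ker_card]
        have hfil : (Finset.univ : Finset V).powerset.filter
            (fun S => S ⊆ U ∧ ∀ i ∈ U, Even ((S.filter (fun j => G.Adj i j)).card))
            = U.powerset.filter
              (fun S => ∀ i ∈ U, Even ((S.filter (fun j => G.Adj i j)).card)) := by
          ext S
          simp [Finset.mem_filter, Finset.mem_powerset]
        rw [← hfil, ← Finset.sum_boole, Finset.mul_sum]
        refine Finset.sum_congr rfl fun S _ => ?_
        split <;> simp
    _ = (2 : ℚ) ^ (-(2 * (Fintype.card V : ℤ))) *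
        ∑ S ∈ (Finset.univ : Finset V).powerset,
          ∑ U ∈ (Finset.univ : Finset V).powerset,
            (if S ⊆ U ∧ (∀ i ∈ U, Even ((S.filter (fun j => G.Adj i j)).card))
              then (-(1:ℚ)/2) ^ (Fintype.card V - U.card) else 0) := by
        rw [Finset.sum_comm]
    _ = (2 : ℚ) ^ (-(2 * (Fintype.card V : ℤ))) *
        ∑ S ∈ (Finset.univ : Finset V).powerset.filter (IsEulerianInduced G),
          (-(1:ℚ)/2) ^ (Fintype.card V - S.card) *
            (-1) ^ (((Finset.univ \ S).filter
              (fun i => Even ((S.filter (fun j => G.Adj i j)).card))).card) := by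
        congr 1
        rw [Finset.sum_filter]
        exact Finset.sum_congr rfl fun S _ => innerSumEuler G S
    _ = (2 : ℚ) ^ (-(3 * (Fintype.card V : ℤ))) *
        ∑ U ∈ (Finset.univ : Finset V).powerset.filter (IsEulerianInduced G),
          (-1 : ℚ) ^ (cutEdges G U).card * (2 : ℚ) ^ U.card := by
        rw [Finset.mul_sum, Finset.mul_sum]
        refine Finset.sum_congr rfl fun S hS => ?_
        have hsplit := Finset.card_filter_add_card_filter_not
          (s := Finset.univ \ S)
          (p := fun i => Even ((S.filter (fun j => G.Adj i j)).card))
        have hcS : S.card ≤ Fintype.card V := Finset.card_le_univ S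
        have hsd : (Finset.univ \ S).card = Fintype.card V - S.card := by
          rw [Finset.card_sdiff_of_subset (Finset.subset_univ S), Finset.card_univ]
        have hb : S.card + ((((Finset.univ \ S).filter
              (fun i => Even ((S.filter (fun j => G.Adj i j)).card))).card)
            + (((Finset.univ \ S).filter
              (fun i => ¬ Even ((S.filter (fun j => G.Adj i j)).card))).card)) = Fintype.card V := by
          omega
        rw [cut_parity]
        exact alg_lemma _ _ _ _ hb
end
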